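/- Let d ≥ 1, α, β > 0, x0 ∈ ℝ^d, λ1, λ2 ≥ 0. Let f1, f2 : ℝ^d × ℝ^d → [0,∞) be C² with Hess f1(z,x) ⪰ λ1·I_{2d} (Hessian in all 2d variables) and ∇²_x f2(z,x) ⪰ λ2·I_d for all (z,x). Let ρ̃, ρ̄ be Borel probability measures on ℝ^d, and let A be the set of Borel probability measures ρ on ℝ^d with finite second moment such that KL(ρ|ρ̃) < ∞, ∫ (W∗ρ) dρ < ∞, and z ↦ f1(z,x) is ρ-integrable for every x ∈ ℝ^d; assume A is nonempty and that x ↦ ∫ f2(z,x) dρ̄(z) is finite for all x. Define G_d(x) := sup_{ρ ∈ A} G_c(ρ,x). Then the function x ↦ G_d(x) − ((λ1 + λ2 + β)/2)‖x‖² is convex on ℝ^d; that is, G_d is strongly convex with constant λ_d = λ1 + λ2 + β. -/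

import Mathlib

open MeasureTheory
open scoped ENNReal RealInnerProductSpace

noncomputable section

/-- The competitive-case energy functional `G_c(ρ, x)`; here the Kullback–Leibler term is
written with the Radon–Nikodym derivative of `ρ` with respect to the reference measure
`ρ̃`, and `(W∗ρ)(z) = ∫ W(z − z') dρ(z')`. -/
noncomputable def Gc {d : ℕ}
    (f1 f2 : EuclideanSpace ℝ (Fin d) → EuclideanSpace ℝ (Fin d) → ℝ)
    (W : EuclideanSpace ℝ (Fin d) → ℝ)
    (ρb ρt : Measure (EuclideanSpace ℝ (Fin d))) (α β : ℝ) (x0 : EuclideanSpace ℝ (Fin d))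
    (ρ : Measure (EuclideanSpace ℝ (Fin d))) (x : EuclideanSpace ℝ (Fin d)) : ℝ :=
  (∫ z, f1 z x ∂ρ) + (∫ z, f2 z x ∂ρb) + (β / 2) * ‖x - x0‖ ^ 2
    - α * (∫ z, Real.log ((ρ.rnDeriv ρt z).toReal) ∂ρ)
    - (1 / 2) * (∫ z, (∫ z', W (z - z') ∂ρ) ∂ρ)

/-- The admissible set `A`: probability measures `ρ` with finite second moment, finite
Kullback–Leibler divergence with respect to `ρ̃`, finite interaction energy
`∫ (W∗ρ) dρ < ∞`, and such that `f1(·,x)` is `ρ`-integrable for every `x`. -/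
def Aset1 {d : ℕ} (f1 : EuclideanSpace ℝ (Fin d) → EuclideanSpace ℝ (Fin d) → ℝ)
    (W : EuclideanSpace ℝ (Fin d) → ℝ) (ρt : Measure (EuclideanSpace ℝ (Fin d))) :
    Set (Measure (EuclideanSpace ℝ (Fin d))) :=
  {ρ | IsProbabilityMeasure ρ ∧ Integrable (fun z => ‖z‖ ^ 2) ρ ∧ ρ ≪ ρt ∧
    Integrable (fun z => Real.log ((ρ.rnDeriv ρt z).toReal)) ρ ∧
    (∫⁻ z, ∫⁻ z', ENNReal.ofReal (W (z - z')) ∂ρ ∂ρ) < ⊤ ∧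
    ∀ x : EuclideanSpace ℝ (Fin d), Integrable (fun z => f1 z x) ρ}

/-- `G_d(x) = sup_{ρ ∈ A} G_c(ρ, x)`, with values in the extended reals. -/
noncomputable def Gd1 {d : ℕ}
    (f1 f2 : EuclideanSpace ℝ (Fin d) → EuclideanSpace ℝ (Fin d) → ℝ)
    (W : EuclideanSpace ℝ (Fin d) → ℝ)
    (ρb ρt : Measure (EuclideanSpace ℝ (Fin d))) (α β : ℝ) (x0 : EuclideanSpace ℝ (Fin d))
    (x : EuclideanSpace ℝ (Fin d)) : EReal :=
  ⨆ ρ ∈ Aset1 f1 W ρt, ((Gc f1 f2 W ρb ρt α β x0 ρ x : ℝ) : EReal)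

lemma normCombo {E : Type*} [NormedAddCommGroup E] [InnerProductSpace ℝ E]
    (x y : E) (a b : ℝ) (hab : a + b = 1) :
    ‖a • x + b • y‖ ^ 2 = a * ‖x‖ ^ 2 + b * ‖y‖ ^ 2 - a * b * ‖x - y‖ ^ 2 := by
  have h1 : ‖a • x + b • y‖ ^ 2 = a^2 * ‖x‖^2 + 2*(a*b)*⟪x, y⟫ + b^2 * ‖y‖^2 := by
    rw [@norm_add_sq_real, norm_smul, norm_smul, real_inner_smul_left, real_inner_smul_right]
    simp [mul_pow]
    ring_nf
  have h2 : ‖x - y‖ ^ 2 = ‖x‖^2 - 2*⟪x, y⟫ + ‖y‖^2 := by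
    rw [@norm_sub_sq_real]
  rw [h1, h2]; linear_combination (a*‖x‖^2 + b*‖y‖^2) * hab

lemma strongConvexIneq {E : Type*} [NormedAddCommGroup E] [NormedSpace ℝ E]
    (g : E → ℝ) (hg : ContDiff ℝ 2 g) (lam : ℝ)
    (hH : ∀ (p v : E), lam * ‖v‖ ^ 2 ≤ iteratedFDeriv ℝ 2 g p ![v, v])
    (x y : E) (a b : ℝ) (ha : 0 ≤ a) (hb : 0 ≤ b) (hab : a + b = 1) :
    g (a • x + b • y) ≤ a * g x + b * g y - (lam / 2) * (a * b) * ‖x - y‖ ^ 2 := by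
  set v := y - x with hv
  set L : ℝ → E := fun t => x + t • v with hL
  have hLd : ∀ t : ℝ, HasDerivAt L v t := by
    intro t
    simpa [hL] using ((hasDerivAt_id t).smul_const v).const_add x
  have hgdiff : Differentiable ℝ g := hg.differentiable (by norm_num)
  have hg1 : ContDiff ℝ 1 (fderiv ℝ g) := hg.fderiv_right (by norm_num)
  have hfd : Differentiable ℝ (fderiv ℝ g) := hg1.differentiable one_ne_zero
  set c : ℝ := lam * ‖v‖ ^ 2 / 2 with hc
  set φ' : ℝ → ℝ := fun t => fderiv ℝ g (L t) v with hφ'def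
  set ψ : ℝ → ℝ := fun t => g (L t) - c * t ^ 2 with hψdef
  have hψd : ∀ t : ℝ, HasDerivAt ψ (φ' t - c * (2 * t)) t := by
    intro t
    have h1 : HasDerivAt (fun t => g (L t)) (φ' t) t :=
      (hgdiff (L t)).hasFDerivAt.comp_hasDerivAt t (hLd t)
    have h2 : HasDerivAt (fun t : ℝ => c * t ^ 2) (c * (2 * t)) t := by
      simpa using (hasDerivAt_pow 2 t).const_mul c
    exact h1.sub h2
  have hderivψ : deriv ψ = fun t => φ' t - c * (2 * t) := by
    funext t; exact (hψd t).deriv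
  have hψ'd : ∀ t : ℝ, HasDerivAt (deriv ψ)
      (fderiv ℝ (fderiv ℝ g) (L t) v v - c * 2) t := by
    intro t
    rw [hderivψ]
    have h1 : HasDerivAt (fun t => fderiv ℝ g (L t)) (fderiv ℝ (fderiv ℝ g) (L t) v) t :=
      (hfd (L t)).hasFDerivAt.comp_hasDerivAt t (hLd t)
    have h2 : HasDerivAt φ' (fderiv ℝ (fderiv ℝ g) (L t) v v) t := by
      simpa using h1.clm_apply (hasDerivAt_const t v)
    have h3 : HasDerivAt (fun t : ℝ => c * (2 * t)) (c * 2) t := by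
      simpa [mul_assoc] using (hasDerivAt_id t).const_mul (c * 2)
    exact h2.sub h3
  have hconv : ConvexOn ℝ Set.univ ψ := by
    apply convexOn_univ_of_deriv2_nonneg
    · exact fun t => (hψd t).differentiableAt
    · exact fun t => (hψ'd t).differentiableAt
    · intro t
      have : deriv^[2] ψ t = deriv (deriv ψ) t := rfl
      rw [this, (hψ'd t).deriv]
      have := hH (L t) v
      rw [iteratedFDeriv_two_apply] at this
      simp only [Matrix.cons_val_zero, Matrix.cons_val_one, Matrix.head_cons] at this
      simp only [hc]
      linarith
  have key := hconv.2 (Set.mem_univ (0 : ℝ)) (Set.mem_univ (1 : ℝ)) ha hb hab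
  simp only [smul_eq_mul, mul_zero, mul_one, zero_add] at key
  have hψ0 : ψ 0 = g x := by simp [hψdef, hL]
  have hψ1 : ψ 1 = g y - c := by simp [hψdef, hL, hv]
  have hψb : ψ b = g (a • x + b • y) - c * b ^ 2 := by
    have : x + b • v = a • x + b • y := by
      rw [hv, smul_sub]
      have : a • x = x - b • x := by
        rw [show a = 1 - b by linarith, sub_smul, one_smul]
      rw [this]; abel
    simp [hψdef, hL, this]
  rw [hψ0, hψ1, hψb] at key
  have hnorm : ‖v‖ = ‖x - y‖ := by rw [hv, norm_sub_rev]
  have hcval : c = lam / 2 * ‖x - y‖ ^ 2 := by rw [hc, hnorm]; ring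
  have hid : c * b ^ 2 = b * c - lam / 2 * (a * b) * ‖x - y‖ ^ 2 := by
    rw [hcval]; linear_combination (lam / 2 * ‖x - y‖ ^ 2 * b) * hab
  linarith [key, hid]

/-- Lemma D.8: strong convexity of `G_d`. Under the convexity
assumptions on `f1` and `f2`, the function `x ↦ G_d(x) − ((λ1+λ2+β)/2)‖x‖²` is convex,
i.e. `G_d` is strongly convex with constant `λ1 + λ2 + β`. -/
theorem stmt1 {d : ℕ} (hd : 1 ≤ d) (α β : ℝ) (hα : 0 < α) (hβ : 0 < β)
    (x0 : EuclideanSpace ℝ (Fin d)) (lam1 lam2 : ℝ) (hlam1 : 0 ≤ lam1) (hlam2 : 0 ≤ lam2)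
    (f1 f2 : EuclideanSpace ℝ (Fin d) → EuclideanSpace ℝ (Fin d) → ℝ)
    (hf1nn : ∀ z x, 0 ≤ f1 z x) (hf2nn : ∀ z x, 0 ≤ f2 z x)
    (hf1C : ContDiff ℝ 2 (fun p : EuclideanSpace ℝ (Fin d) × EuclideanSpace ℝ (Fin d) => f1 p.1 p.2))
    (hf2C : ContDiff ℝ 2 (fun p : EuclideanSpace ℝ (Fin d) × EuclideanSpace ℝ (Fin d) => f2 p.1 p.2))
    (hf1hess : ∀ (z x v w : EuclideanSpace ℝ (Fin d)),
      lam1 * (‖v‖ ^ 2 + ‖w‖ ^ 2) ≤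
        iteratedFDeriv ℝ 2 (fun p : EuclideanSpace ℝ (Fin d) × EuclideanSpace ℝ (Fin d) =>
          f1 p.1 p.2) (z, x) ![(v, w), (v, w)])
    (hf2hess : ∀ (z x v : EuclideanSpace ℝ (Fin d)),
      lam2 * ‖v‖ ^ 2 ≤ iteratedFDeriv ℝ 2 (fun x' => f2 z x') x ![v, v])
    (ρt ρb : Measure (EuclideanSpace ℝ (Fin d)))
    [IsProbabilityMeasure ρt] [IsProbabilityMeasure ρb]
    (W : EuclideanSpace ℝ (Fin d) → ℝ) (hWc : Continuous W) (hWnn : ∀ z, 0 ≤ W z)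
    (hAne : (Aset1 f1 W ρt).Nonempty)
    (hf2fin : ∀ x : EuclideanSpace ℝ (Fin d), Integrable (fun z => f2 z x) ρb) :
    ∀ (x y : EuclideanSpace ℝ (Fin d)) (a b : ℝ), 0 ≤ a → 0 ≤ b → a + b = 1 →
      Gd1 f1 f2 W ρb ρt α β x0 (a • x + b • y)
          - ((((lam1 + lam2 + β) / 2) * ‖a • x + b • y‖ ^ 2 : ℝ) : EReal)
        ≤ (a : EReal) * (Gd1 f1 f2 W ρb ρt α β x0 x
              - ((((lam1 + lam2 + β) / 2) * ‖x‖ ^ 2 : ℝ) : EReal))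
          + (b : EReal) * (Gd1 f1 f2 W ρb ρt α β x0 y
              - ((((lam1 + lam2 + β) / 2) * ‖y‖ ^ 2 : ℝ) : EReal)) := by
  intro x y a b ha hb hab
  let E := EuclideanSpace ℝ (Fin d)
  set c : ℝ := (lam1 + lam2 + β) / 2 with hcdef
  set σ : E := a • x + b • y with hσ
  set G : Measure E → E → ℝ := Gc f1 f2 W ρb ρt α β x0 with hG
  set S : E → EReal := Gd1 f1 f2 W ρb ρt α β x0 with hS
  have hSsup : ∀ u : E, S u = ⨆ ρ ∈ Aset1 f1 W ρt, ((G ρ u : ℝ) : EReal) := fun u => rfl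
  -- pointwise inequality for f1
  have hptf1 : ∀ z : E, f1 z σ ≤ a * f1 z x + b * f1 z y - lam1 / 2 * (a * b) * ‖x - y‖ ^ 2 := by
    intro z
    have hH : ∀ (p v : E × E), lam1 * ‖v‖ ^ 2 ≤
        iteratedFDeriv ℝ 2 (fun p : E × E => f1 p.1 p.2) p ![v, v] := by
      intro p v
      have h := hf1hess p.1 p.2 v.1 v.2
      have hnorm : ‖v‖ ^ 2 ≤ ‖v.1‖ ^ 2 + ‖v.2‖ ^ 2 := by
        rw [Prod.norm_def]
        rcases max_cases ‖v.1‖ ‖v.2‖ with ⟨h1, _⟩ | ⟨h1, _⟩ <;> rw [h1] <;>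
          nlinarith [sq_nonneg ‖v.1‖, sq_nonneg ‖v.2‖]
      calc lam1 * ‖v‖ ^ 2 ≤ lam1 * (‖v.1‖ ^ 2 + ‖v.2‖ ^ 2) := by nlinarith
        _ ≤ _ := by simpa using h
    have key := strongConvexIneq (fun p : E × E => f1 p.1 p.2) hf1C lam1 hH
      (z, x) (z, y) a b ha hb hab
    have h1 : a • ((z, x) : E × E) + b • ((z, y) : E × E) = (z, σ) := by
      rw [Prod.smul_mk, Prod.smul_mk, Prod.mk_add_mk, ← add_smul, hab, one_smul]
    have h2 : ‖((z, x) : E × E) - (z, y)‖ = ‖x - y‖ := by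
      rw [Prod.mk_sub_mk, sub_self, Prod.norm_def]
      simp [norm_nonneg]
    rw [h1, h2] at key
    simpa using key
  -- pointwise inequality for f2
  have hptf2 : ∀ z : E, f2 z σ ≤ a * f2 z x + b * f2 z y - lam2 / 2 * (a * b) * ‖x - y‖ ^ 2 := by
    intro z
    have hC : ContDiff ℝ 2 (fun x' : E => f2 z x') :=
      hf2C.comp ((contDiff_const (c := z)).prodMk contDiff_id)
    exact strongConvexIneq (fun x' => f2 z x') hC lam2 (fun p v => hf2hess z p v)
      x y a b ha hb hab
  -- integrated inequality for f2
  have hIf2 : ∫ z, f2 z σ ∂ρb ≤ a * ∫ z, f2 z x ∂ρb + b * ∫ z, f2 z y ∂ρb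
      - lam2 / 2 * (a * b) * ‖x - y‖ ^ 2 := by
    have hax : Integrable (fun z => a * f2 z x) ρb := (hf2fin x).const_mul a
    have hay : Integrable (fun z => b * f2 z y) ρb := (hf2fin y).const_mul b
    have hadd : Integrable (fun z => a * f2 z x + b * f2 z y) ρb := hax.add hay
    have hint : Integrable (fun z => a * f2 z x + b * f2 z y
        - lam2 / 2 * (a * b) * ‖x - y‖ ^ 2) ρb := hadd.sub (integrable_const _)
    have h := integral_mono (hf2fin σ) hint (fun z => hptf2 z)
    rwa [integral_sub hadd (integrable_const _), integral_add hax hay,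
      integral_const_mul, integral_const_mul, integral_const, probReal_univ,
      one_smul] at h
  -- per-ρ inequality
  have hGc : ∀ ρ ∈ Aset1 f1 W ρt, G ρ σ - c * ‖σ‖ ^ 2
      ≤ a * (G ρ x - c * ‖x‖ ^ 2) + b * (G ρ y - c * ‖y‖ ^ 2) := by
    intro ρ hρ
    obtain ⟨hprob, -, -, -, -, hf1int⟩ := hρ
    haveI := hprob
    have hIf1 : ∫ z, f1 z σ ∂ρ ≤ a * ∫ z, f1 z x ∂ρ + b * ∫ z, f1 z y ∂ρ
        - lam1 / 2 * (a * b) * ‖x - y‖ ^ 2 := by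
      have hax : Integrable (fun z => a * f1 z x) ρ := (hf1int x).const_mul a
      have hay : Integrable (fun z => b * f1 z y) ρ := (hf1int y).const_mul b
      have hadd : Integrable (fun z => a * f1 z x + b * f1 z y) ρ := hax.add hay
      have hint : Integrable (fun z => a * f1 z x + b * f1 z y
          - lam1 / 2 * (a * b) * ‖x - y‖ ^ 2) ρ := hadd.sub (integrable_const _)
      have h := integral_mono (hf1int σ) hint (fun z => hptf1 z)
      rwa [integral_sub hadd (integrable_const _), integral_add hax hay,
        integral_const_mul, integral_const_mul, integral_const, probReal_univ,
        one_smul] at h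
    have hβterm : β / 2 * ‖σ - x0‖ ^ 2 = a * (β / 2 * ‖x - x0‖ ^ 2)
        + b * (β / 2 * ‖y - x0‖ ^ 2) - β / 2 * (a * b) * ‖x - y‖ ^ 2 := by
      have h := normCombo (x - x0) (y - x0) a b hab
      have he : a • (x - x0) + b • (y - x0) = σ - x0 := by
        rw [smul_sub, smul_sub, hσ]
        rw [show a • x - a • x0 + (b • y - b • x0) = a • x + b • y - (a • x0 + b • x0) by abel,
          ← add_smul, hab, one_smul]
      have he2 : (x - x0) - (y - x0) = x - y := by abel
      rw [he, he2] at h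
      rw [h]; ring
    have hnormσ : c * ‖σ‖ ^ 2 = a * (c * ‖x‖ ^ 2) + b * (c * ‖y‖ ^ 2)
        - c * (a * b) * ‖x - y‖ ^ 2 := by
      rw [hσ, normCombo x y a b hab]; ring
    have hcN : c * (a * b) * ‖x - y‖ ^ 2 = lam1 / 2 * (a * b) * ‖x - y‖ ^ 2
        + lam2 / 2 * (a * b) * ‖x - y‖ ^ 2 + β / 2 * (a * b) * ‖x - y‖ ^ 2 := by
      rw [hcdef]; ring
    simp only [hG, Gc]
    set K : ℝ := ∫ z, Real.log ((ρ.rnDeriv ρt z).toReal) ∂ρ with hK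
    set Wt : ℝ := ∫ z, (∫ z', W (z - z') ∂ρ) ∂ρ with hWt
    have hk : a * (α * K) + b * (α * K) = α * K := by rw [← add_mul, hab, one_mul]
    have hw : a * (1 / 2 * Wt) + b * (1 / 2 * Wt) = 1 / 2 * Wt := by
      rw [← add_mul, hab, one_mul]
    linarith [hIf1, hIf2, hβterm, hnormσ, hcN, hk, hw]
  -- bottom bound
  obtain ⟨ρ0, hρ0⟩ := hAne
  have hSbot : ∀ u : E, (⊥ : EReal) < S u := by
    intro u
    calc (⊥ : EReal) < ((G ρ0 u : ℝ) : EReal) := EReal.bot_lt_coe _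
      _ ≤ S u := by
          rw [hSsup]
          exact le_iSup₂ (f := fun ρ (_ : ρ ∈ Aset1 f1 W ρt) => ((G ρ u : ℝ) : EReal)) ρ0 hρ0
  -- case a = 0
  rcases eq_or_lt_of_le ha with haz | hap
  · have hb1 : b = 1 := by linarith
    have hσy : σ = y := by rw [hσ, ← haz, hb1, zero_smul, one_smul, zero_add]
    rw [← haz, hb1, hσy]
    simp only [EReal.coe_zero, EReal.coe_one, zero_mul, one_mul, zero_add]
    exact le_refl _
  rcases eq_or_lt_of_le hb with hbz | hbp
  · have ha1 : a = 1 := by linarith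
    have hσx : σ = x := by rw [hσ, ← hbz, ha1, zero_smul, one_smul, add_zero]
    rw [← hbz, ha1, hσx]
    simp only [EReal.coe_zero, EReal.coe_one, zero_mul, one_mul, add_zero]
    exact le_refl _
  -- both positive
  have hsub_ne_bot : ∀ (t : EReal) (r : ℝ), t ≠ ⊥ → t - (r : EReal) ≠ ⊥ := by
    intro t r ht h
    rw [sub_eq_add_neg] at h
    rcases EReal.add_eq_bot_iff.1 h with h' | h'
    · exact ht h'
    · exact (EReal.coe_ne_bot (-r)) (by rw [← h']; simp)
  by_cases hxt : S x = ⊤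
  · have h1 : (a : EReal) * (S x - ((c * ‖x‖ ^ 2 : ℝ) : EReal)) = ⊤ := by
      rw [hxt, EReal.top_sub_coe, EReal.coe_mul_top_of_pos hap]
    have h2 : (b : EReal) * (S y - ((c * ‖y‖ ^ 2 : ℝ) : EReal)) ≠ ⊥ := by
      have hy_ne : S y - ((c * ‖y‖ ^ 2 : ℝ) : EReal) ≠ ⊥ :=
        hsub_ne_bot _ _ (hSbot y).ne'
      by_cases hyt : S y - ((c * ‖y‖ ^ 2 : ℝ) : EReal) = ⊤
      · rw [hyt, EReal.coe_mul_top_of_pos hbp]; exact (by simp : (⊤:EReal) ≠ ⊥)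
      · lift (S y - ((c * ‖y‖ ^ 2 : ℝ) : EReal)) to ℝ using ⟨hyt, hy_ne⟩ with r hr
        rw [← EReal.coe_mul]; exact EReal.coe_ne_bot _
    rw [h1, EReal.top_add_of_ne_bot h2]
    exact le_top
  by_cases hyt : S y = ⊤
  · have h1 : (b : EReal) * (S y - ((c * ‖y‖ ^ 2 : ℝ) : EReal)) = ⊤ := by
      rw [hyt, EReal.top_sub_coe, EReal.coe_mul_top_of_pos hbp]
    have h2 : (a : EReal) * (S x - ((c * ‖x‖ ^ 2 : ℝ) : EReal)) ≠ ⊥ := by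
      have hx_ne : S x - ((c * ‖x‖ ^ 2 : ℝ) : EReal) ≠ ⊥ :=
        hsub_ne_bot _ _ (hSbot x).ne'
      by_cases hxt' : S x - ((c * ‖x‖ ^ 2 : ℝ) : EReal) = ⊤
      · rw [hxt', EReal.coe_mul_top_of_pos hap]; exact (by simp : (⊤:EReal) ≠ ⊥)
      · lift (S x - ((c * ‖x‖ ^ 2 : ℝ) : EReal)) to ℝ using ⟨hxt', hx_ne⟩ with r hr
        rw [← EReal.coe_mul]; exact EReal.coe_ne_bot _
    rw [h1, EReal.add_top_of_ne_bot h2]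
    exact le_top
  -- main case: both finite
  set sx : ℝ := (S x).toReal with hsxdef
  set sy : ℝ := (S y).toReal with hsydef
  have hsx : S x = (sx : EReal) := (EReal.coe_toReal hxt (hSbot x).ne').symm
  have hsy : S y = (sy : EReal) := (EReal.coe_toReal hyt (hSbot y).ne').symm
  have hGx_le : ∀ ρ ∈ Aset1 f1 W ρt, G ρ x ≤ sx := by
    intro ρ hρ
    have h : ((G ρ x : ℝ) : EReal) ≤ S x := by
      rw [hSsup]
      exact le_iSup₂ (f := fun ρ (_ : ρ ∈ Aset1 f1 W ρt) => ((G ρ x : ℝ) : EReal)) ρ hρ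
    rw [hsx] at h
    exact_mod_cast h
  have hGy_le : ∀ ρ ∈ Aset1 f1 W ρt, G ρ y ≤ sy := by
    intro ρ hρ
    have h : ((G ρ y : ℝ) : EReal) ≤ S y := by
      rw [hSsup]
      exact le_iSup₂ (f := fun ρ (_ : ρ ∈ Aset1 f1 W ρt) => ((G ρ y : ℝ) : EReal)) ρ hρ
    rw [hsy] at h
    exact_mod_cast h
  set M : ℝ := a * (sx - c * ‖x‖ ^ 2) + b * (sy - c * ‖y‖ ^ 2) + c * ‖σ‖ ^ 2 with hM
  have hSM : S σ ≤ ((M : ℝ) : EReal) := by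
    rw [hSsup]
    apply iSup₂_le
    intro ρ hρ
    have h1 := hGc ρ hρ
    have h2 : a * (G ρ x - c * ‖x‖ ^ 2) ≤ a * (sx - c * ‖x‖ ^ 2) :=
      mul_le_mul_of_nonneg_left (by linarith [hGx_le ρ hρ]) ha
    have h3 : b * (G ρ y - c * ‖y‖ ^ 2) ≤ b * (sy - c * ‖y‖ ^ 2) :=
      mul_le_mul_of_nonneg_left (by linarith [hGy_le ρ hρ]) hb
    have : G ρ σ ≤ M := by rw [hM]; linarith
    exact_mod_cast this
  calc S σ - ((c * ‖σ‖ ^ 2 : ℝ) : EReal)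
      ≤ ((M : ℝ) : EReal) - ((c * ‖σ‖ ^ 2 : ℝ) : EReal) := EReal.sub_le_sub hSM le_rfl
    _ = ((M - c * ‖σ‖ ^ 2 : ℝ) : EReal) := by rw [EReal.coe_sub]
    _ = ((a * (sx - c * ‖x‖ ^ 2) + b * (sy - c * ‖y‖ ^ 2) : ℝ) : EReal) := by
        rw [hM]; ring_nf
    _ = (a : EReal) * (((sx : ℝ) : EReal) - ((c * ‖x‖ ^ 2 : ℝ) : EReal))
        + (b : EReal) * (((sy : ℝ) : EReal) - ((c * ‖y‖ ^ 2 : ℝ) : EReal)) := by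
        rw [← EReal.coe_sub, ← EReal.coe_sub, ← EReal.coe_mul, ← EReal.coe_mul,
          ← EReal.coe_add]
    _ = (a : EReal) * (S x - ((c * ‖x‖ ^ 2 : ℝ) : EReal))
        + (b : EReal) * (S y - ((c * ‖y‖ ^ 2 : ℝ) : EReal)) := by rw [hsx, hsy]
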